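/- arXiv:2502.14946 — 3 statements merged into one kernel-verified Lean document; each statement's English description precedes it below -/
import Mathlib

section
/- Cao–Titi barotropic advection identity: let h > 0 and let v : ℝ² × ℝ → ℝ² be continuously differentiable such that the vertical average v̄ = 𝒜₂v is horizontally divergence-free, ∂_x v̄₁ + ∂_y v̄₂ ≡ 0. Write ṽ = v − v̄. Then for every (x,y): (1/h)∫_{−h}^0 [(v·∇_H)v + w(v)∂_z v](x,y,z) dz = (v̄·∇_H)v̄(x,y) + (1/h)∫_{−h}^0 [(ṽ·∇_H)ṽ + (∇_H·ṽ)ṽ](x,y,z) dz. -/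
open MeasureTheory intervalIntegral

/-- The barotropic (vertical) average `v̄ = 𝒜₂v` of a horizontal velocity field. -/
noncomputable def baroAvg2 (h : ℝ) (v : ℝ → ℝ → ℝ → ℝ × ℝ) (x y : ℝ) : ℝ × ℝ :=
  h⁻¹ • ∫ z in (-h)..(0:ℝ), v x y z

open Metric in
/-- Differentiation of an interval integral with respect to a parameter. -/
lemma hasDerivAt_param_intervalIntegral (a b : ℝ) (g g' : ℝ → ℝ → ℝ × ℝ)
    (hd : ∀ s z : ℝ, HasDerivAt (fun s' => g s' z) (g' s z) s)
    (hcg : Continuous fun p : ℝ × ℝ => g p.1 p.2)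
    (hcg' : Continuous fun p : ℝ × ℝ => g' p.1 p.2) (s : ℝ) :
    HasDerivAt (fun s' => ∫ z in a..b, g s' z) (∫ z in a..b, g' s z) s := by
  obtain ⟨C, hC⟩ : ∃ C, ∀ p ∈ (Set.Icc (s - 1) (s + 1)) ×ˢ Set.uIcc a b,
      ‖g' p.1 p.2‖ ≤ C := by
    rcases (((isCompact_Icc.prod isCompact_uIcc).image_of_continuousOn
      hcg'.norm.continuousOn)).bddAbove with ⟨C, hC⟩
    exact ⟨C, fun p hp => hC ⟨p, hp, rfl⟩⟩
  have key := intervalIntegral.hasDerivAt_integral_of_dominated_loc_of_deriv_le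
    (F := fun s' z => g s' z) (F' := fun s' z => g' s' z) (bound := fun _ => C)
    (μ := volume) (a := a) (b := b) (x₀ := s) (Metric.ball_mem_nhds s one_pos)
    (Filter.Eventually.of_forall fun x =>
      (hcg.comp ((continuous_const (y := x)).prodMk continuous_id)).aestronglyMeasurable)
    ((hcg.comp ((continuous_const (y := s)).prodMk continuous_id)).intervalIntegrable a b)
    (hcg'.comp ((continuous_const (y := s)).prodMk continuous_id)).aestronglyMeasurable
    ?_ intervalIntegrable_const
    (Filter.Eventually.of_forall fun z _ x _ => hd x z)
  · exact key.2
  · refine Filter.Eventually.of_forall fun z hz x hx => hC (x, z) ⟨?_, Set.uIoc_subset_uIcc hz⟩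
    rw [Real.ball_eq_Ioo] at hx
    exact Set.Ioo_subset_Icc_self hx

set_option maxHeartbeats 1000000 in
/-- **Cao–Titi barotropic advection identity.**
Let `v : ℝ² × ℝ → ℝ²` be continuously differentiable (partial derivatives
`vx = ∂_x v`, `vy = ∂_y v`, `vz = ∂_z v` supplied as data, jointly continuous),
with `v̄ = 𝒜₂v` differentiable with horizontal partials `vbx, vby` and
`∂_x v̄₁ + ∂_y v̄₂ ≡ 0`. Writing `w(v)(x,y,z) = ∫_z^0 (∇_H·v) dz'` and `ṽ = v − v̄`,
for every `(x,y)`: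
`(1/h)∫_{−h}^0 [(v·∇_H)v + w(v)∂_z v] dz
  = (v̄·∇_H)v̄ + (1/h)∫_{−h}^0 [(ṽ·∇_H)ṽ + (∇_H·ṽ)ṽ] dz`. -/
theorem cao_titi_barotropic_advection
    (h : ℝ) (hh : 0 < h)
    (v vx vy vz : ℝ → ℝ → ℝ → ℝ × ℝ)
    (vbx vby : ℝ → ℝ → ℝ × ℝ)
    (hvx : ∀ x y z : ℝ, HasDerivAt (fun x' => v x' y z) (vx x y z) x)
    (hvy : ∀ x y z : ℝ, HasDerivAt (fun y' => v x y' z) (vy x y z) y)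
    (hvz : ∀ x y z : ℝ, HasDerivAt (fun z' => v x y z') (vz x y z) z)
    (hcv : Continuous fun p : ℝ × ℝ × ℝ => v p.1 p.2.1 p.2.2)
    (hcvx : Continuous fun p : ℝ × ℝ × ℝ => vx p.1 p.2.1 p.2.2)
    (hcvy : Continuous fun p : ℝ × ℝ × ℝ => vy p.1 p.2.1 p.2.2)
    (hcvz : Continuous fun p : ℝ × ℝ × ℝ => vz p.1 p.2.1 p.2.2)
    (hbx : ∀ x y : ℝ, HasDerivAt (fun x' => baroAvg2 h v x' y) (vbx x y) x)
    (hby : ∀ x y : ℝ, HasDerivAt (fun y' => baroAvg2 h v x y') (vby x y) y)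
    (hdiv : ∀ x y : ℝ, (vbx x y).1 + (vby x y).2 = 0) :
    ∀ x y : ℝ,
      h⁻¹ • (∫ z in (-h)..(0:ℝ),
          ((v x y z).1 • vx x y z + (v x y z).2 • vy x y z
            + (∫ z' in z..(0:ℝ), ((vx x y z').1 + (vy x y z').2)) • vz x y z))
        = (baroAvg2 h v x y).1 • vbx x y + (baroAvg2 h v x y).2 • vby x y
          + h⁻¹ • (∫ z in (-h)..(0:ℝ),
              ((v x y z - baroAvg2 h v x y).1 • (vx x y z - vbx x y)
                + (v x y z - baroAvg2 h v x y).2 • (vy x y z - vby x y)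
                + ((vx x y z - vbx x y).1 + (vy x y z - vby x y).2)
                    • (v x y z - baroAvg2 h v x y))) := by
  intro x y
  have hcv1 : Continuous fun p : ℝ × ℝ => v p.1 y p.2 :=
    hcv.comp (continuous_fst.prodMk (continuous_const.prodMk continuous_snd))
  have hcvx1 : Continuous fun p : ℝ × ℝ => vx p.1 y p.2 :=
    hcvx.comp (continuous_fst.prodMk (continuous_const.prodMk continuous_snd))
  have hcv2 : Continuous fun p : ℝ × ℝ => v x p.1 p.2 :=
    hcv.comp (continuous_const.prodMk (continuous_fst.prodMk continuous_snd))
  have hcvy2 : Continuous fun p : ℝ × ℝ => vy x p.1 p.2 :=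
    hcvy.comp (continuous_const.prodMk (continuous_fst.prodMk continuous_snd))
  have hxyz : Continuous fun z : ℝ => ((x, y, z) : ℝ × ℝ × ℝ) := by fun_prop
  have cv : Continuous fun z => v x y z := hcv.comp hxyz
  have cvx : Continuous fun z => vx x y z := hcvx.comp hxyz
  have cvy : Continuous fun z => vy x y z := hcvy.comp hxyz
  have cvz : Continuous fun z => vz x y z := hcvz.comp hxyz
  set vb : ℝ × ℝ := baroAvg2 h v x y with hvb
  set bX : ℝ × ℝ := vbx x y with hbX
  set bY : ℝ × ℝ := vby x y with hbY
  -- the integral of v equals h • vb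
  have havg : (∫ z in (-h)..(0:ℝ), v x y z) = h • vb := by
    rw [hvb, baroAvg2, smul_smul, mul_inv_cancel₀ hh.ne', one_smul]
  -- differentiation under the integral sign: ∫ vx = h • bX, ∫ vy = h • bY
  have hIx : (∫ z in (-h)..(0:ℝ), vx x y z) = h • bX := by
    have hD : HasDerivAt (fun x' => baroAvg2 h v x' y)
        (h⁻¹ • ∫ z in (-h)..(0:ℝ), vx x y z) x := by
      have := (hasDerivAt_param_intervalIntegral (-h) 0 (fun s z => v s y z)
        (fun s z => vx s y z) (fun s z => hvx s y z) hcv1 hcvx1 x).const_smul h⁻¹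
      simpa [baroAvg2, Pi.smul_def] using this
    have : bX = h⁻¹ • ∫ z in (-h)..(0:ℝ), vx x y z := (hbx x y).unique hD
    rw [this, smul_smul, mul_inv_cancel₀ hh.ne', one_smul]
  have hIy : (∫ z in (-h)..(0:ℝ), vy x y z) = h • bY := by
    have hD : HasDerivAt (fun y' => baroAvg2 h v x y')
        (h⁻¹ • ∫ z in (-h)..(0:ℝ), vy x y z) y := by
      have := (hasDerivAt_param_intervalIntegral (-h) 0 (fun s z => v x s z)
        (fun s z => vy x s z) (fun s z => hvy x s z) hcv2 hcvy2 y).const_smul h⁻¹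
      simpa [baroAvg2, Pi.smul_def] using this
    have : bY = h⁻¹ • ∫ z in (-h)..(0:ℝ), vy x y z := (hby x y).unique hD
    rw [this, smul_smul, mul_inv_cancel₀ hh.ne', one_smul]
  -- the horizontal divergence
  set D : ℝ → ℝ := fun z => (vx x y z).1 + (vy x y z).2 with hD
  have hDc : Continuous D := cvx.fst.add cvy.snd
  have hfst : (∫ z in (-h)..(0:ℝ), (vx x y z).1) = (∫ z in (-h)..(0:ℝ), vx x y z).1 := by
    simpa using (ContinuousLinearMap.fst ℝ ℝ ℝ).intervalIntegral_comp_comm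
      (cvx.intervalIntegrable (-h) 0)
  have hsnd : (∫ z in (-h)..(0:ℝ), (vy x y z).2) = (∫ z in (-h)..(0:ℝ), vy x y z).2 := by
    simpa using (ContinuousLinearMap.snd ℝ ℝ ℝ).intervalIntegral_comp_comm
      (cvy.intervalIntegrable (-h) 0)
  have hDI : (∫ z in (-h)..(0:ℝ), D z) = 0 := by
    rw [hD]
    rw [intervalIntegral.integral_add (cvx.fst.intervalIntegrable _ _)
      (cvy.snd.intervalIntegrable _ _), hfst, hsnd, hIx, hIy]
    have := hdiv x y
    simp only [Prod.smul_fst, Prod.smul_snd, smul_eq_mul, ← hbX, ← hbY]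
    rw [← mul_add, this, mul_zero]
  -- the vertical velocity W and integration by parts
  set W : ℝ → ℝ := fun z => ∫ t in z..(0:ℝ), D t with hWdef
  have hW' : ∀ z, HasDerivAt W (-(D z)) z := by
    intro z
    have h1 : HasDerivAt (fun u => ∫ t in (0:ℝ)..u, D t) (D z) z :=
      intervalIntegral.integral_hasDerivAt_right (hDc.intervalIntegrable _ _)
        (hDc.stronglyMeasurableAtFilter volume _) hDc.continuousAt
    have h2 : W = fun u => -∫ t in (0:ℝ)..u, D t :=
      funext fun u => intervalIntegral.integral_symm 0 u
    rw [h2]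
    exact h1.neg
  have hWc : Continuous W :=
    continuous_iff_continuousAt.mpr fun z => (hW' z).continuousAt
  have hG : ∀ z, HasDerivAt (fun t => W t • v x y t)
      (W z • vz x y z + (-(D z)) • v x y z) z := fun z => (hW' z).smul (hvz x y z)
  have hIBP0 : (∫ z in (-h)..(0:ℝ), (W z • vz x y z + (-(D z)) • v x y z)) = 0 := by
    rw [intervalIntegral.integral_eq_sub_of_hasDerivAt (fun z _ => hG z)
      (((hWc.fun_smul cvz).fun_add ((hDc.fun_neg).fun_smul cv)).intervalIntegrable _ _)]
    have hW0 : W 0 = 0 := intervalIntegral.integral_same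
    have hWh : W (-h) = 0 := hDI
    simp [hW0, hWh]
  have hIBP : (∫ z in (-h)..(0:ℝ), W z • vz x y z)
      = ∫ z in (-h)..(0:ℝ), D z • v x y z := by
    have h1 := intervalIntegral.integral_add (μ := volume)
      ((hWc.fun_smul cvz).intervalIntegrable (-h) 0) (((hDc.fun_neg).fun_smul cv).intervalIntegrable (-h) 0)
    rw [h1] at hIBP0
    have h2 : (∫ z in (-h)..(0:ℝ), (-(D z)) • v x y z)
        = -∫ z in (-h)..(0:ℝ), D z • v x y z := by
      simp [neg_smul, intervalIntegral.integral_neg]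
    rw [h2] at hIBP0
    exact sub_eq_zero.mp (by rw [sub_eq_add_neg]; exact hIBP0)
  -- abbreviations for the advection and divergence terms
  set A : ℝ → ℝ × ℝ := fun z => (v x y z).1 • vx x y z + (v x y z).2 • vy x y z with hA
  have hAc : Continuous A := (cv.fst.fun_smul cvx).fun_add (cv.snd.fun_smul cvy)
  have hBc : Continuous fun z => D z • v x y z := hDc.fun_smul cv
  -- left-hand side integral
  have hL : (∫ z in (-h)..(0:ℝ),
      ((v x y z).1 • vx x y z + (v x y z).2 • vy x y z
        + (∫ z' in z..(0:ℝ), ((vx x y z').1 + (vy x y z').2)) • vz x y z))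
      = (∫ z in (-h)..(0:ℝ), A z) + ∫ z in (-h)..(0:ℝ), D z • v x y z := by
    have : (fun z => ((v x y z).1 • vx x y z + (v x y z).2 • vy x y z
        + (∫ z' in z..(0:ℝ), ((vx x y z').1 + (vy x y z').2)) • vz x y z))
        = fun z => A z + W z • vz x y z := rfl
    rw [this, intervalIntegral.integral_add (hAc.intervalIntegrable _ _)
      ((hWc.fun_smul cvz).intervalIntegrable _ _), hIBP]
  -- the correction term S
  set S : ℝ → ℝ × ℝ := fun z => (v x y z).1 • bX + (v x y z).2 • bY
      + vb.1 • vx x y z + vb.2 • vy x y z + D z • vb - (vb.1 • bX + vb.2 • bY) with hS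
  have hSc : Continuous S := by
    apply Continuous.sub _ continuous_const
    exact (((((cv.fst.fun_smul continuous_const).fun_add (cv.snd.fun_smul continuous_const)).fun_add
      (continuous_const.fun_smul cvx)).fun_add (continuous_const.fun_smul cvy)).fun_add
      (hDc.fun_smul continuous_const))
  -- right-hand side integrand equals A + B - S pointwise
  have hRint : (fun z => ((v x y z - vb).1 • (vx x y z - bX)
        + (v x y z - vb).2 • (vy x y z - bY)
        + ((vx x y z - bX).1 + (vy x y z - bY).2) • (v x y z - vb)))
      = fun z => A z + D z • v x y z - S z := by
    funext z
    have hd0 : (vx x y z - bX).1 + (vy x y z - bY).2 = D z := by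
      have := hdiv x y
      simp only [Prod.fst_sub, Prod.snd_sub, hD, ← hbX, ← hbY]
      linarith
    rw [hd0, hA, hS]
    simp only [Prod.fst_sub, Prod.snd_sub]
    module
  -- integral of S
  have hfstv : (∫ z in (-h)..(0:ℝ), (v x y z).1) = h * vb.1 := by
    simpa [havg] using (ContinuousLinearMap.fst ℝ ℝ ℝ).intervalIntegral_comp_comm (μ := volume)
      (cv.intervalIntegrable (-h) 0)
  have hsndv : (∫ z in (-h)..(0:ℝ), (v x y z).2) = h * vb.2 := by
    simpa [havg] using (ContinuousLinearMap.snd ℝ ℝ ℝ).intervalIntegral_comp_comm (μ := volume)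
      (cv.intervalIntegrable (-h) 0)
  have hSI : (∫ z in (-h)..(0:ℝ), S z) = h • (vb.1 • bX + vb.2 • bY) := by
    rw [hS]
    have c1 : Continuous fun z => (v x y z).1 • bX + (v x y z).2 • bY :=
      (cv.fst.fun_smul continuous_const).fun_add (cv.snd.fun_smul continuous_const)
    have cb1 : Continuous fun z : ℝ => vb.1 • vx x y z :=
      (continuous_const : Continuous fun _ : ℝ => vb.1).fun_smul cvx
    have cb2 : Continuous fun z : ℝ => vb.2 • vy x y z :=
      (continuous_const : Continuous fun _ : ℝ => vb.2).fun_smul cvy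
    have cb3 : Continuous fun z : ℝ => D z • vb := hDc.fun_smul continuous_const
    have c2 := c1.fun_add cb1
    have c3 := c2.fun_add cb2
    have c4 := c3.fun_add cb3
    rw [intervalIntegral.integral_sub (c4.intervalIntegrable _ _) intervalIntegrable_const]
    rw [intervalIntegral.integral_add (c3.intervalIntegrable _ _)
      (cb3.intervalIntegrable _ _)]
    rw [intervalIntegral.integral_add (c2.intervalIntegrable _ _)
      (cb2.intervalIntegrable _ _)]
    rw [intervalIntegral.integral_add (c1.intervalIntegrable _ _)
      (cb1.intervalIntegrable _ _)]
    rw [intervalIntegral.integral_add ((cv.fst.fun_smul continuous_const).intervalIntegrable _ _)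
      ((cv.snd.fun_smul continuous_const).intervalIntegrable _ _)]
    rw [intervalIntegral.integral_smul_const, intervalIntegral.integral_smul_const,
      intervalIntegral.integral_smul, intervalIntegral.integral_smul,
      intervalIntegral.integral_smul_const, intervalIntegral.integral_const]
    rw [hfstv, hsndv, hIx, hIy, hDI]
    simp only [sub_neg_eq_add, zero_add, zero_smul]
    module
  -- right-hand side integral
  have hR : (∫ z in (-h)..(0:ℝ),
      ((v x y z - vb).1 • (vx x y z - bX) + (v x y z - vb).2 • (vy x y z - bY)
        + ((vx x y z - bX).1 + (vy x y z - bY).2) • (v x y z - vb)))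
      = (∫ z in (-h)..(0:ℝ), A z) + (∫ z in (-h)..(0:ℝ), D z • v x y z)
        - h • (vb.1 • bX + vb.2 • bY) := by
    rw [hRint, intervalIntegral.integral_sub ((hAc.fun_add hBc).intervalIntegrable _ _)
      (hSc.intervalIntegrable _ _),
      intervalIntegral.integral_add (hAc.intervalIntegrable _ _)
      (hBc.intervalIntegrable _ _), hSI]
  rw [hL, hR]
  have hc : h⁻¹ • (h • (vb.1 • bX + vb.2 • bY)) = vb.1 • bX + vb.2 • bY := by
    rw [smul_smul, inv_mul_cancel₀ hh.ne', one_smul]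
  rw [smul_sub, hc]
  abel
end

section
/- Baroclinic advection identity: let h > 0 and let v : ℝ² × ℝ → ℝ² be continuously differentiable such that v̄ = 𝒜₂v satisfies ∂_x v̄₁ + ∂_y v̄₂ ≡ 0, and write ṽ = v − v̄. Then for all (x,y) and z ∈ [−h,0]: ℛ[(v·∇_H)v + w(v)∂_z v] = (ṽ·∇_H)ṽ + w(ṽ)∂_z ṽ + (v̄·∇_H)ṽ + (ṽ·∇_H)v̄ − 𝒜[(ṽ·∇_H)ṽ + (∇_H·ṽ)ṽ], where 𝒜 and ℛ = Id − 𝒜 act componentwise. -/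
open MeasureTheory intervalIntegral

open Metric in
/-- Differentiation under the integral sign for a continuously differentiable
parameter-dependent interval integral. -/
lemma hasDerivAt_paramIntegral (h : ℝ) (f f' : ℝ → ℝ → ℝ × ℝ)
    (hf : ∀ s t : ℝ, HasDerivAt (fun s' => f s' t) (f' s t) s)
    (hcf : Continuous fun p : ℝ × ℝ => f p.1 p.2)
    (hcf' : Continuous fun p : ℝ × ℝ => f' p.1 p.2) (s : ℝ) :
    HasDerivAt (fun s' => ∫ t in (-h)..(0:ℝ), f s' t)
      (∫ t in (-h)..(0:ℝ), f' s t) s := by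
  obtain ⟨C, hC⟩ := ((isCompact_Icc (a := s - 1) (b := s + 1)).prod
    (isCompact_Icc (a := min (-h) 0) (b := max (-h) (0:ℝ)))).exists_bound_of_continuousOn
    hcf'.continuousOn
  have main := intervalIntegral.hasDerivAt_integral_of_dominated_loc_of_deriv_le
    (F := f) (F' := f') (x₀ := s) (a := -h) (b := 0) (μ := volume)
    (bound := fun _ => C) (Metric.ball_mem_nhds s one_pos)
    (Filter.Eventually.of_forall fun x =>
      (hcf.comp (continuous_const.prodMk continuous_id)).aestronglyMeasurable)
    ((hcf.comp (continuous_const.prodMk continuous_id)).intervalIntegrable _ _)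
    ((hcf'.comp (continuous_const.prodMk continuous_id)).aestronglyMeasurable)
    (Filter.Eventually.of_forall fun t ht x hx => by
      refine hC (x, t) ⟨?_, le_of_lt ht.1, ht.2⟩
      rw [Real.ball_eq_Ioo] at hx
      exact ⟨hx.1.le, hx.2.le⟩)
    (intervalIntegrable_const)
    (Filter.Eventually.of_forall fun t _ x _ => hf x t)
  exact main.2

/-- **Baroclinic advection identity.**
Let `v : ℝ² × ℝ → ℝ²` be continuously differentiable (partial derivatives
`vx, vy, vz` supplied as data, jointly continuous), with `v̄ = 𝒜₂v` differentiable
with horizontal partials `vbx, vby` and `∂_x v̄₁ + ∂_y v̄₂ ≡ 0`; write `ṽ = v − v̄`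
(so `∂_x ṽ = vx − vbx`, `∂_y ṽ = vy − vby`, `∂_z ṽ = vz`). Then for all `(x,y)` and
`z ∈ [−h,0]`:
`ℛ[(v·∇_H)v + w(v)∂_z v]
  = (ṽ·∇_H)ṽ + w(ṽ)∂_z ṽ + (v̄·∇_H)ṽ + (ṽ·∇_H)v̄ − 𝒜[(ṽ·∇_H)ṽ + (∇_H·ṽ)ṽ]`,
where `𝒜f = (1/h)∫_{−h}^0 f dz'` and `ℛ = Id − 𝒜`. -/
theorem baroclinic_advection_identity
    (h : ℝ) (hh : 0 < h)
    (v vx vy vz : ℝ → ℝ → ℝ → ℝ × ℝ)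
    (vbx vby : ℝ → ℝ → ℝ × ℝ)
    (hvx : ∀ x y z : ℝ, HasDerivAt (fun x' => v x' y z) (vx x y z) x)
    (hvy : ∀ x y z : ℝ, HasDerivAt (fun y' => v x y' z) (vy x y z) y)
    (hvz : ∀ x y z : ℝ, HasDerivAt (fun z' => v x y z') (vz x y z) z)
    (hcv : Continuous fun p : ℝ × ℝ × ℝ => v p.1 p.2.1 p.2.2)
    (hcvx : Continuous fun p : ℝ × ℝ × ℝ => vx p.1 p.2.1 p.2.2)
    (hcvy : Continuous fun p : ℝ × ℝ × ℝ => vy p.1 p.2.1 p.2.2)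
    (hcvz : Continuous fun p : ℝ × ℝ × ℝ => vz p.1 p.2.1 p.2.2)
    (hbx : ∀ x y : ℝ, HasDerivAt (fun x' => baroAvg2 h v x' y) (vbx x y) x)
    (hby : ∀ x y : ℝ, HasDerivAt (fun y' => baroAvg2 h v x y') (vby x y) y)
    (hdiv : ∀ x y : ℝ, (vbx x y).1 + (vby x y).2 = 0) :
    ∀ x y : ℝ, ∀ z ∈ Set.Icc (-h) (0:ℝ),
      ((v x y z).1 • vx x y z + (v x y z).2 • vy x y z
          + (∫ z' in z..(0:ℝ), ((vx x y z').1 + (vy x y z').2)) • vz x y z)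
        - h⁻¹ • (∫ t in (-h)..(0:ℝ),
            ((v x y t).1 • vx x y t + (v x y t).2 • vy x y t
              + (∫ z' in t..(0:ℝ), ((vx x y z').1 + (vy x y z').2)) • vz x y t))
      = ((v x y z - baroAvg2 h v x y).1 • (vx x y z - vbx x y)
            + (v x y z - baroAvg2 h v x y).2 • (vy x y z - vby x y))
        + (∫ z' in z..(0:ℝ),
            ((vx x y z' - vbx x y).1 + (vy x y z' - vby x y).2)) • vz x y z
        + ((baroAvg2 h v x y).1 • (vx x y z - vbx x y)
            + (baroAvg2 h v x y).2 • (vy x y z - vby x y))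
        + ((v x y z - baroAvg2 h v x y).1 • vbx x y
            + (v x y z - baroAvg2 h v x y).2 • vby x y)
        - h⁻¹ • (∫ t in (-h)..(0:ℝ),
            ((v x y t - baroAvg2 h v x y).1 • (vx x y t - vbx x y)
              + (v x y t - baroAvg2 h v x y).2 • (vy x y t - vby x y)
              + ((vx x y t - vbx x y).1 + (vy x y t - vby x y).2)
                  • (v x y t - baroAvg2 h v x y))) := by
  intro x y z hz
  have hne : h ≠ 0 := ne_of_gt hh
  have hcV : Continuous fun t : ℝ => v x y t :=
    hcv.comp (continuous_const.prodMk (continuous_const.prodMk continuous_id))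
  have hcVX : Continuous fun t : ℝ => vx x y t :=
    hcvx.comp (continuous_const.prodMk (continuous_const.prodMk continuous_id))
  have hcVY : Continuous fun t : ℝ => vy x y t :=
    hcvy.comp (continuous_const.prodMk (continuous_const.prodMk continuous_id))
  have hcVZ : Continuous fun t : ℝ => vz x y t :=
    hcvz.comp (continuous_const.prodMk (continuous_const.prodMk continuous_id))
  have hcd : Continuous fun t : ℝ => (vx x y t).1 + (vy x y t).2 :=
    (continuous_fst.comp hcVX).add (continuous_snd.comp hcVY)
  -- Step (a): vbx = h⁻¹ • ∫ vx, vby = h⁻¹ • ∫ vy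
  have haX : vbx x y = h⁻¹ • ∫ t in (-h)..(0:ℝ), vx x y t := by
    have h1 : HasDerivAt (fun x' => ∫ t in (-h)..(0:ℝ), v x' y t)
        (∫ t in (-h)..(0:ℝ), vx x y t) x :=
      hasDerivAt_paramIntegral h (fun s t => v s y t) (fun s t => vx s y t)
        (fun s t => hvx s y t)
        (hcv.comp (continuous_fst.prodMk (continuous_const.prodMk continuous_snd)))
        (hcvx.comp (continuous_fst.prodMk (continuous_const.prodMk continuous_snd))) x
    exact (hbx x y).unique (h1.const_smul h⁻¹)
  have haY : vby x y = h⁻¹ • ∫ t in (-h)..(0:ℝ), vy x y t := by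
    have h1 : HasDerivAt (fun y' => ∫ t in (-h)..(0:ℝ), v x y' t)
        (∫ t in (-h)..(0:ℝ), vy x y t) y :=
      hasDerivAt_paramIntegral h (fun s t => v x s t) (fun s t => vy x s t)
        (fun s t => hvy x s t)
        (hcv.comp (continuous_const.prodMk (continuous_fst.prodMk continuous_snd)))
        (hcvy.comp (continuous_const.prodMk (continuous_fst.prodMk continuous_snd))) y
    exact (hby x y).unique (h1.const_smul h⁻¹)
  have hJX : (∫ t in (-h)..(0:ℝ), vx x y t) = h • vbx x y := by
    rw [haX, smul_inv_smul₀ hne]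
  have hJY : (∫ t in (-h)..(0:ℝ), vy x y t) = h • vby x y := by
    rw [haY, smul_inv_smul₀ hne]
  have hI : (∫ t in (-h)..(0:ℝ), v x y t) = h • baroAvg2 h v x y := by
    rw [baroAvg2, smul_inv_smul₀ hne]
  -- Step (c): total divergence integrates to zero
  have hD0 : (∫ t in (-h)..(0:ℝ), ((vx x y t).1 + (vy x y t).2)) = 0 := by
    have e1 : (∫ t in (-h)..(0:ℝ), ((vx x y t).1 + (vy x y t).2))
        = (∫ t in (-h)..(0:ℝ), (vx x y t).1) + ∫ t in (-h)..(0:ℝ), (vy x y t).2 :=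
      intervalIntegral.integral_add
        ((continuous_fst.comp hcVX).intervalIntegrable _ _)
        ((continuous_snd.comp hcVY).intervalIntegrable _ _)
    have e2 : (∫ t in (-h)..(0:ℝ), (vx x y t).1) = (∫ t in (-h)..(0:ℝ), vx x y t).1 := by
      have := (ContinuousLinearMap.fst ℝ ℝ ℝ).intervalIntegral_comp_comm
        (hcVX.intervalIntegrable (-h) 0 :
          IntervalIntegrable (fun t => vx x y t) volume (-h) 0)
      simpa using this
    have e3 : (∫ t in (-h)..(0:ℝ), (vy x y t).2) = (∫ t in (-h)..(0:ℝ), vy x y t).2 := by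
      have := (ContinuousLinearMap.snd ℝ ℝ ℝ).intervalIntegral_comp_comm
        (hcVY.intervalIntegrable (-h) 0 :
          IntervalIntegrable (fun t => vy x y t) volume (-h) 0)
      simpa using this
    rw [e1, e2, e3, hJX, hJY]
    simp only [Prod.smul_fst, Prod.smul_snd, smul_eq_mul]
    nlinarith [hdiv x y]
  -- D is differentiable with derivative -d, hence continuous
  have hDder : ∀ t : ℝ,
      HasDerivAt (fun u => ∫ z' in u..(0:ℝ), ((vx x y z').1 + (vy x y z').2))
        (-((vx x y t).1 + (vy x y t).2)) t := by
    intro t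
    have hprim : HasDerivAt (fun u => ∫ z' in (0:ℝ)..u, ((vx x y z').1 + (vy x y z').2))
        ((vx x y t).1 + (vy x y t).2) t :=
      intervalIntegral.integral_hasDerivAt_right (hcd.intervalIntegrable _ _)
        (hcd.stronglyMeasurableAtFilter _ _) hcd.continuousAt
    have heq : (fun u => ∫ z' in u..(0:ℝ), ((vx x y z').1 + (vy x y z').2))
        = fun u => -∫ z' in (0:ℝ)..u, ((vx x y z').1 + (vy x y z').2) := by
      funext u; exact intervalIntegral.integral_symm 0 u
    rw [heq]
    exact hprim.neg
  have hcD : Continuous fun t : ℝ => ∫ z' in t..(0:ℝ), ((vx x y z').1 + (vy x y z').2) :=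
    continuous_iff_continuousAt.mpr fun t => (hDder t).continuousAt
  -- Step (d): integration by parts
  have hIBP : (∫ t in (-h)..(0:ℝ),
        (∫ z' in t..(0:ℝ), ((vx x y z').1 + (vy x y z').2)) • vz x y t)
      = ∫ t in (-h)..(0:ℝ), ((vx x y t).1 + (vy x y t).2) • v x y t := by
    have hder : ∀ t ∈ Set.uIcc (-h) (0:ℝ),
        HasDerivAt (fun u => (∫ z' in u..(0:ℝ), ((vx x y z').1 + (vy x y z').2)) • v x y u)
          ((∫ z' in t..(0:ℝ), ((vx x y z').1 + (vy x y z').2)) • vz x y t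
            + (-((vx x y t).1 + (vy x y t).2)) • v x y t) t :=
      fun t _ => (hDder t).smul (hvz x y t)
    have hint : IntervalIntegrable
        (fun t => (∫ z' in t..(0:ℝ), ((vx x y z').1 + (vy x y z').2)) • vz x y t
          + (-((vx x y t).1 + (vy x y t).2)) • v x y t) volume (-h) 0 :=
      ((hcD.smul hcVZ).add ((hcd.neg).smul hcV)).intervalIntegrable _ _
    have e := intervalIntegral.integral_eq_sub_of_hasDerivAt hder hint
    have hD00 : (∫ z' in (0:ℝ)..(0:ℝ), ((vx x y z').1 + (vy x y z').2)) = 0 :=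
      intervalIntegral.integral_same
    rw [hD00, hD0] at e
    simp only [zero_smul, sub_zero] at e
    have esplit : (∫ t in (-h)..(0:ℝ),
          ((∫ z' in t..(0:ℝ), ((vx x y z').1 + (vy x y z').2)) • vz x y t
            + (-((vx x y t).1 + (vy x y t).2)) • v x y t))
        = (∫ t in (-h)..(0:ℝ),
            (∫ z' in t..(0:ℝ), ((vx x y z').1 + (vy x y z').2)) • vz x y t)
          + ∫ t in (-h)..(0:ℝ), (-((vx x y t).1 + (vy x y t).2)) • v x y t :=
      intervalIntegral.integral_add ((hcD.smul hcVZ).intervalIntegrable _ _)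
        (((hcd.neg).smul hcV).intervalIntegrable _ _)
    have eneg : (∫ t in (-h)..(0:ℝ), (-((vx x y t).1 + (vy x y t).2)) • v x y t)
        = -∫ t in (-h)..(0:ℝ), ((vx x y t).1 + (vy x y t).2) • v x y t := by
      simp only [neg_smul]
      exact intervalIntegral.integral_neg
    rw [esplit, eneg] at e
    exact sub_eq_zero.mp (by rw [sub_eq_add_neg]; exact e)
  -- the modified divergence equals the full divergence
  have hinner : ∀ u : ℝ, (vx x y u - vbx x y).1 + (vy x y u - vby x y).2
      = (vx x y u).1 + (vy x y u).2 := by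
    intro u
    have := hdiv x y
    simp only [Prod.fst_sub, Prod.snd_sub]
    linarith
  have hzint : (∫ z' in z..(0:ℝ), ((vx x y z' - vbx x y).1 + (vy x y z' - vby x y).2))
      = ∫ z' in z..(0:ℝ), ((vx x y z').1 + (vy x y z').2) :=
    intervalIntegral.integral_congr fun u _ => hinner u
  rw [hzint]
  set vb : ℝ × ℝ := baroAvg2 h v x y with hvb
  have efstV : (∫ t in (-h)..(0:ℝ), (v x y t).1) = (∫ t in (-h)..(0:ℝ), v x y t).1 := by
    have := (ContinuousLinearMap.fst ℝ ℝ ℝ).intervalIntegral_comp_comm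
      (hcV.intervalIntegrable (-h) 0 :
        IntervalIntegrable (fun t => v x y t) volume (-h) 0)
    simpa using this
  have esndV : (∫ t in (-h)..(0:ℝ), (v x y t).2) = (∫ t in (-h)..(0:ℝ), v x y t).2 := by
    have := (ContinuousLinearMap.snd ℝ ℝ ℝ).intervalIntegral_comp_comm
      (hcV.intervalIntegrable (-h) 0 :
        IntervalIntegrable (fun t => v x y t) volume (-h) 0)
    simpa using this
  -- continuity of the various integrands
  have cA : Continuous fun t : ℝ => (v x y t).1 • vbx x y :=
    (continuous_fst.comp hcV).smul continuous_const
  have cB : Continuous fun t : ℝ => (v x y t).2 • vby x y :=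
    (continuous_snd.comp hcV).smul continuous_const
  have cC : Continuous fun t : ℝ => vb.1 • vx x y t := hcVX.const_smul vb.1
  have cCC : Continuous fun t : ℝ => vb.2 • vy x y t := hcVY.const_smul vb.2
  have cE : Continuous fun t : ℝ => ((vx x y t).1 + (vy x y t).2) • vb :=
    hcd.smul continuous_const
  have cF : Continuous fun t : ℝ => (v x y t).1 • vx x y t + (v x y t).2 • vy x y t :=
    ((continuous_fst.comp hcV).smul hcVX).add ((continuous_snd.comp hcV).smul hcVY)
  have cG : Continuous fun t : ℝ =>
      (v x y t).1 • vx x y t + (v x y t).2 • vy x y t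
        + ((vx x y t).1 + (vy x y t).2) • v x y t := cF.add (hcd.smul hcV)
  have cH : Continuous fun t : ℝ =>
      (v x y t).1 • vbx x y + (v x y t).2 • vby x y
        + vb.1 • vx x y t + vb.2 • vy x y t
        + ((vx x y t).1 + (vy x y t).2) • vb :=
    ((((cA.add cB).add cC).add cCC).add cE)
  -- evaluate the integral of G
  have eG : (∫ t in (-h)..(0:ℝ),
      ((v x y t).1 • vx x y t + (v x y t).2 • vy x y t
        + ((vx x y t).1 + (vy x y t).2) • v x y t))
    = ∫ t in (-h)..(0:ℝ),
        ((v x y t).1 • vx x y t + (v x y t).2 • vy x y t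
          + (∫ z' in t..(0:ℝ), ((vx x y z').1 + (vy x y z').2)) • vz x y t) := by
    rw [intervalIntegral.integral_add (cF.intervalIntegrable _ _)
        ((hcd.fun_smul hcV).intervalIntegrable _ _),
      intervalIntegral.integral_add (cF.intervalIntegrable _ _)
        ((hcD.fun_smul hcVZ).intervalIntegrable _ _), hIBP]
  -- evaluate the integral of H
  have eH : (∫ t in (-h)..(0:ℝ),
      ((v x y t).1 • vbx x y + (v x y t).2 • vby x y
        + vb.1 • vx x y t + vb.2 • vy x y t
        + ((vx x y t).1 + (vy x y t).2) • vb))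
    = h • (vb.1 • vbx x y + vb.2 • vby x y)
      + h • (vb.1 • vbx x y + vb.2 • vby x y) := by
    rw [intervalIntegral.integral_add
        ((((cA.fun_add cB).fun_add cC).fun_add cCC).intervalIntegrable _ _)
        (cE.intervalIntegrable _ _),
      intervalIntegral.integral_add (((cA.fun_add cB).fun_add cC).intervalIntegrable _ _)
        (cCC.intervalIntegrable _ _),
      intervalIntegral.integral_add ((cA.fun_add cB).intervalIntegrable _ _)
        (cC.intervalIntegrable _ _),
      intervalIntegral.integral_add (cA.intervalIntegrable _ _)
        (cB.intervalIntegrable _ _),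
      intervalIntegral.integral_smul_const, intervalIntegral.integral_smul_const,
      intervalIntegral.integral_smul, intervalIntegral.integral_smul,
      intervalIntegral.integral_smul_const,
      efstV, esndV, hI, hJX, hJY, hD0]
    simp only [Prod.smul_fst, Prod.smul_snd, smul_eq_mul, zero_smul, add_zero,
      smul_smul]
    module
  -- the main integral identity for the baroclinic advection term
  have hR : (∫ t in (-h)..(0:ℝ),
      ((v x y t - vb).1 • (vx x y t - vbx x y)
        + (v x y t - vb).2 • (vy x y t - vby x y)
        + ((vx x y t - vbx x y).1 + (vy x y t - vby x y).2) • (v x y t - vb)))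
    = (∫ t in (-h)..(0:ℝ),
        ((v x y t).1 • vx x y t + (v x y t).2 • vy x y t
          + (∫ z' in t..(0:ℝ), ((vx x y z').1 + (vy x y z').2)) • vz x y t))
      - h • (vb.1 • vbx x y + vb.2 • vby x y) := by
    have e1 : (∫ t in (-h)..(0:ℝ),
        ((v x y t - vb).1 • (vx x y t - vbx x y)
          + (v x y t - vb).2 • (vy x y t - vby x y)
          + ((vx x y t - vbx x y).1 + (vy x y t - vby x y).2) • (v x y t - vb)))
      = ∫ t in (-h)..(0:ℝ),
          (((v x y t).1 • vx x y t + (v x y t).2 • vy x y t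
              + ((vx x y t).1 + (vy x y t).2) • v x y t)
            - ((v x y t).1 • vbx x y + (v x y t).2 • vby x y
              + vb.1 • vx x y t + vb.2 • vy x y t
              + ((vx x y t).1 + (vy x y t).2) • vb)
            + (vb.1 • vbx x y + vb.2 • vby x y)) := by
      refine intervalIntegral.integral_congr fun t _ => ?_
      rw [hinner t]
      simp only [Prod.fst_sub, Prod.snd_sub]
      module
    rw [e1, intervalIntegral.integral_add ((cG.fun_sub cH).intervalIntegrable _ _)
        intervalIntegrable_const,
      intervalIntegral.integral_sub (cG.intervalIntegrable _ _)
        (cH.intervalIntegrable _ _),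
      eG, eH, intervalIntegral.integral_const]
    module
  rw [hR]
  rw [show h⁻¹ • ((∫ t in (-h)..(0:ℝ),
        ((v x y t).1 • vx x y t + (v x y t).2 • vy x y t
          + (∫ z' in t..(0:ℝ), ((vx x y z').1 + (vy x y z').2)) • vz x y t))
      - h • (vb.1 • vbx x y + vb.2 • vby x y))
    = h⁻¹ • (∫ t in (-h)..(0:ℝ),
        ((v x y t).1 • vx x y t + (v x y t).2 • vy x y t
          + (∫ z' in t..(0:ℝ), ((vx x y z').1 + (vy x y z').2)) • vz x y t))
      - (vb.1 • vbx x y + vb.2 • vby x y) from by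
    rw [smul_sub, inv_smul_smul₀ hne]]
  simp only [Prod.fst_sub, Prod.snd_sub]
  module
end

section
/- Orthogonality of the transport of the vertical gradient: let h > 0 and let v : ℝ² × ℝ → ℝ² be twice continuously differentiable, compactly supported in the horizontal variables (there is a compact Q ⊂ ℝ² with v(x,y,z) = 0 whenever (x,y) ∉ Q), and satisfying ∫_{−h}^0 (∇_H·v)(x,y,z) dz = 0 for all (x,y). Then ∫_{ℝ² × [−h,0]} [(v·∇_H)∂_z v + w(v)∂_{zz} v] · ∂_z v dx dy dz = 0. -/
open MeasureTheory intervalIntegral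

/-- Partial derivative in `x` of a field on `ℝ² × ℝ` (coordinates `(x,y,z)`). -/
noncomputable def pdX (v : ℝ × ℝ × ℝ → ℝ × ℝ) (q : ℝ × ℝ × ℝ) : ℝ × ℝ :=
  fderiv ℝ v q (1, 0, 0)

/-- Partial derivative in `y`. -/
noncomputable def pdY (v : ℝ × ℝ × ℝ → ℝ × ℝ) (q : ℝ × ℝ × ℝ) : ℝ × ℝ :=
  fderiv ℝ v q (0, 1, 0)

/-- Partial derivative in `z`. -/
noncomputable def pdZ (v : ℝ × ℝ × ℝ → ℝ × ℝ) (q : ℝ × ℝ × ℝ) : ℝ × ℝ :=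
  fderiv ℝ v q (0, 0, 1)

/-- The vertical velocity `w(v)(x,y,z) = ∫_z^0 (∇_H·v)(x,y,z') dz'`. -/
noncomputable def wVert (v : ℝ × ℝ × ℝ → ℝ × ℝ) (q : ℝ × ℝ × ℝ) : ℝ :=
  ∫ z' in q.2.2..(0:ℝ), ((pdX v (q.1, q.2.1, z')).1 + (pdY v (q.1, q.2.1, z')).2)

/-! ### Auxiliary machinery -/

/-- Horizontal divergence. -/
noncomputable def gdiv (v : ℝ × ℝ × ℝ → ℝ × ℝ) (q : ℝ × ℝ × ℝ) : ℝ :=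
  (pdX v q).1 + (pdY v q).2

/-- Half the squared norm of the vertical derivative. -/
noncomputable def FF (v : ℝ × ℝ × ℝ → ℝ × ℝ) (q : ℝ × ℝ × ℝ) : ℝ :=
  ((pdZ v q).1 * (pdZ v q).1 + (pdZ v q).2 * (pdZ v q).2) / 2

/-- Directional derivative of `FF` in direction `e`. -/
noncomputable def dFF (v : ℝ × ℝ × ℝ → ℝ × ℝ) (e : ℝ × ℝ × ℝ) (q : ℝ × ℝ × ℝ) : ℝ :=
  (fderiv ℝ (pdZ v) q e).1 * (pdZ v q).1 + (fderiv ℝ (pdZ v) q e).2 * (pdZ v q).2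

noncomputable def TX (v : ℝ × ℝ × ℝ → ℝ × ℝ) (q : ℝ × ℝ × ℝ) : ℝ :=
  (fderiv ℝ v q (1,0,0)).1 * FF v q + (v q).1 * dFF v (1,0,0) q
noncomputable def TY (v : ℝ × ℝ × ℝ → ℝ × ℝ) (q : ℝ × ℝ × ℝ) : ℝ :=
  (fderiv ℝ v q (0,1,0)).2 * FF v q + (v q).2 * dFF v (0,1,0) q
noncomputable def TZ (v : ℝ × ℝ × ℝ → ℝ × ℝ) (q : ℝ × ℝ × ℝ) : ℝ :=
  -(gdiv v q) * FF v q + wVert v q * dFF v (0,0,1) q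

lemma pointwise_eq (v : ℝ × ℝ × ℝ → ℝ × ℝ) (q : ℝ × ℝ × ℝ) :
    (((v q).1 • fderiv ℝ (pdZ v) q (1, 0, 0)
        + (v q).2 • fderiv ℝ (pdZ v) q (0, 1, 0)
        + wVert v q • fderiv ℝ (pdZ v) q (0, 0, 1)).1 * (pdZ v q).1
      + ((v q).1 • fderiv ℝ (pdZ v) q (1, 0, 0)
          + (v q).2 • fderiv ℝ (pdZ v) q (0, 1, 0)
          + wVert v q • fderiv ℝ (pdZ v) q (0, 0, 1)).2 * (pdZ v q).2)
    = TX v q + TY v q + TZ v q := by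
  simp only [TX, TY, TZ, FF, dFF, gdiv, pdX, pdY, Prod.fst_add, Prod.snd_add,
    Prod.smul_fst, Prod.smul_snd, smul_eq_mul]
  ring

section aux

variable {v : ℝ × ℝ × ℝ → ℝ × ℝ} {Q : Set (ℝ × ℝ)}

lemma contDiff_pdZ (hv : ContDiff ℝ 2 v) : ContDiff ℝ 1 (pdZ v) :=
  (hv.fderiv_right (by norm_num)).clm_apply contDiff_const

lemma cont_fderiv_v (hv : ContDiff ℝ 2 v) (e : ℝ × ℝ × ℝ) :
    Continuous fun q => fderiv ℝ v q e :=
  (hv.continuous_fderiv (by norm_num)).clm_apply continuous_const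

lemma cont_fderiv_pdZ (hv : ContDiff ℝ 2 v) (e : ℝ × ℝ × ℝ) :
    Continuous fun q => fderiv ℝ (pdZ v) q e :=
  ((contDiff_pdZ hv).continuous_fderiv (by norm_num)).clm_apply continuous_const

lemma cont_pdZ (hv : ContDiff ℝ 2 v) : Continuous (pdZ v) :=
  (contDiff_pdZ hv).continuous

lemma cont_gdiv (hv : ContDiff ℝ 2 v) : Continuous (gdiv v) :=
  ((cont_fderiv_v hv (1,0,0)).fst).add ((cont_fderiv_v hv (0,1,0)).snd)

lemma cont_FF (hv : ContDiff ℝ 2 v) : Continuous (FF v) :=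
  ((((cont_pdZ hv).fst).mul ((cont_pdZ hv).fst)).add
    (((cont_pdZ hv).snd).mul ((cont_pdZ hv).snd))).div_const 2

lemma cont_dFF (hv : ContDiff ℝ 2 v) (e : ℝ × ℝ × ℝ) : Continuous (dFF v e) :=
  (((cont_fderiv_pdZ hv e).fst).mul ((cont_pdZ hv).fst)).add
    (((cont_fderiv_pdZ hv e).snd).mul ((cont_pdZ hv).snd))

lemma cont_wVert (hv : ContDiff ℝ 2 v) : Continuous (wVert v) := by
  have hmap : Continuous fun p : (ℝ × ℝ × ℝ) × ℝ => ((p.1.1, p.1.2.1, p.2) : ℝ × ℝ × ℝ) := by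
    fun_prop
  have hg : Continuous (Function.uncurry fun (q : ℝ × ℝ × ℝ) (t : ℝ) =>
      ((pdX v (q.1, q.2.1, t)).1 + (pdY v (q.1, q.2.1, t)).2)) := by
    have h1 := (cont_fderiv_v hv (1,0,0)).comp hmap
    have h2 := (cont_fderiv_v hv (0,1,0)).comp hmap
    exact (h1.fst).add (h2.snd)
  have hc : Continuous fun q : ℝ × ℝ × ℝ =>
      ∫ t in (0:ℝ)..q.2.2, ((pdX v (q.1, q.2.1, t)).1 + (pdY v (q.1, q.2.1, t)).2) :=
    intervalIntegral.continuous_parametric_intervalIntegral_of_continuous (μ := volume)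
      hg (by fun_prop)
  have : wVert v = fun q => -(∫ t in (0:ℝ)..q.2.2,
      ((pdX v (q.1, q.2.1, t)).1 + (pdY v (q.1, q.2.1, t)).2)) := by
    funext q
    rw [wVert, intervalIntegral.integral_symm]
  rw [this]
  exact hc.neg

lemma cont_TX (hv : ContDiff ℝ 2 v) : Continuous (TX v) :=
  (((cont_fderiv_v hv (1,0,0)).fst).mul (cont_FF hv)).add
    ((hv.continuous.fst).mul (cont_dFF hv (1,0,0)))

lemma cont_TY (hv : ContDiff ℝ 2 v) : Continuous (TY v) :=
  (((cont_fderiv_v hv (0,1,0)).snd).mul (cont_FF hv)).add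
    ((hv.continuous.snd).mul (cont_dFF hv (0,1,0)))

lemma cont_TZ (hv : ContDiff ℝ 2 v) : Continuous (TZ v) :=
  (((cont_gdiv hv).neg).mul (cont_FF hv)).add
    ((cont_wVert hv).mul (cont_dFF hv (0,0,1)))

lemma vanish_lemma (hQ : IsCompact Q)
    (hsupp : ∀ x y z : ℝ, (x, y) ∉ Q → v (x, y, z) = 0) :
    ∀ q : ℝ × ℝ × ℝ, (q.1, q.2.1) ∉ Q →
      v q = 0 ∧ fderiv ℝ v q = 0 ∧ pdZ v q = 0 ∧ fderiv ℝ (pdZ v) q = 0 ∧ wVert v q = 0 := by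
  set U : Set (ℝ × ℝ × ℝ) := {q | (q.1, q.2.1) ∉ Q} with hU
  have hUopen : IsOpen U := by
    have : Continuous fun q : ℝ × ℝ × ℝ => ((q.1, q.2.1) : ℝ × ℝ) := by fun_prop
    exact (hQ.isClosed.preimage this).isOpen_compl
  have hv0 : ∀ q ∈ U, v q = 0 := fun q hq => hsupp q.1 q.2.1 q.2.2 hq
  have hfd0 : ∀ q ∈ U, fderiv ℝ v q = 0 := by
    intro q hq
    have hev : v =ᶠ[nhds q] (fun _ => 0) :=
      Filter.eventually_of_mem (hUopen.mem_nhds hq) hv0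
    rw [hev.fderiv_eq, fderiv_fun_const]
    rfl
  have hpz0 : ∀ q ∈ U, pdZ v q = 0 := by
    intro q hq; rw [pdZ, hfd0 q hq]; rfl
  refine fun q hq => ⟨hv0 q hq, hfd0 q hq, hpz0 q hq, ?_, ?_⟩
  · have hev : pdZ v =ᶠ[nhds q] (fun _ => 0) :=
      Filter.eventually_of_mem (hUopen.mem_nhds hq) hpz0
    rw [hev.fderiv_eq, fderiv_fun_const]
    rfl
  · rw [wVert]
    have : ∀ t : ℝ, ((pdX v (q.1, q.2.1, t)).1 + (pdY v (q.1, q.2.1, t)).2) = 0 := by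
      intro t
      have h0 : ((q.1, q.2.1, t) : ℝ × ℝ × ℝ) ∈ U := hq
      rw [pdX, pdY, hfd0 _ h0]
      simp
    simp only [this, intervalIntegral.integral_zero]

lemma T_vanish (hQ : IsCompact Q)
    (hsupp : ∀ x y z : ℝ, (x, y) ∉ Q → v (x, y, z) = 0) :
    ∀ q : ℝ × ℝ × ℝ, (q.1, q.2.1) ∉ Q → TX v q = 0 ∧ TY v q = 0 ∧ TZ v q = 0 := by
  intro q hq
  obtain ⟨h1, h2, h3, h4, h5⟩ := vanish_lemma hQ hsupp q hq
  refine ⟨?_, ?_, ?_⟩ <;>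
    simp [TX, TY, TZ, FF, dFF, gdiv, pdX, pdY, h1, h2, h3, h4, h5]

/-! ### Line derivatives -/

lemma hasDerivAt_FF_line (hv : ContDiff ℝ 2 v) {c : ℝ → ℝ × ℝ × ℝ} {e : ℝ × ℝ × ℝ} {x : ℝ}
    (hc : HasDerivAt c e x) :
    HasDerivAt (fun t => FF v (c t)) (dFF v e (c x)) x := by
  have hdu : HasFDerivAt (pdZ v) (fderiv ℝ (pdZ v) (c x)) (c x) :=
    (((contDiff_pdZ hv).differentiable (by norm_num)) (c x)).hasFDerivAt
  have h2 : HasDerivAt (fun t => pdZ v (c t)) (fderiv ℝ (pdZ v) (c x) e) x :=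
    hdu.comp_hasDerivAt x hc
  have h2a : HasDerivAt (fun t => (pdZ v (c t)).1) ((fderiv ℝ (pdZ v) (c x) e).1) x :=
    (hasFDerivAt_fst.comp_hasDerivAt x h2 :)
  have h2b : HasDerivAt (fun t => (pdZ v (c t)).2) ((fderiv ℝ (pdZ v) (c x) e).2) x :=
    (hasFDerivAt_snd.comp_hasDerivAt x h2 :)
  have := ((h2a.mul h2a).add (h2b.mul h2b)).div_const 2
  refine this.congr_deriv ?_
  unfold dFF
  ring

lemma hasDerivAt_PX (hv : ContDiff ℝ 2 v) (y z x : ℝ) :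
    HasDerivAt (fun t => (v (t, y, z)).1 * FF v (t, y, z)) (TX v (x, y, z)) x := by
  have hc : HasDerivAt (fun t => ((t, y, z) : ℝ × ℝ × ℝ)) ((1:ℝ), (0:ℝ), (0:ℝ)) x :=
    (hasDerivAt_id x).prodMk (hasDerivAt_const x (y, z))
  have hdv : HasFDerivAt v (fderiv ℝ v (x, y, z)) (x, y, z) :=
    ((hv.differentiable (by norm_num)) (x, y, z)).hasFDerivAt
  have h1 : HasDerivAt (fun t => v (t, y, z)) (fderiv ℝ v (x, y, z) (1, 0, 0)) x :=
    hdv.comp_hasDerivAt x hc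
  have h1a : HasDerivAt (fun t => (v (t, y, z)).1) ((fderiv ℝ v (x, y, z) (1, 0, 0)).1) x :=
    (hasFDerivAt_fst.comp_hasDerivAt x h1 :)
  have hF := hasDerivAt_FF_line hv hc
  exact h1a.mul hF

lemma hasDerivAt_PY (hv : ContDiff ℝ 2 v) (x z y : ℝ) :
    HasDerivAt (fun t => (v (x, t, z)).2 * FF v (x, t, z)) (TY v (x, y, z)) y := by
  have hc : HasDerivAt (fun t => ((x, t, z) : ℝ × ℝ × ℝ)) ((0:ℝ), (1:ℝ), (0:ℝ)) y :=
    (hasDerivAt_const y x).prodMk ((hasDerivAt_id y).prodMk (hasDerivAt_const y z))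
  have hdv : HasFDerivAt v (fderiv ℝ v (x, y, z)) (x, y, z) :=
    ((hv.differentiable (by norm_num)) (x, y, z)).hasFDerivAt
  have h1 : HasDerivAt (fun t => v (x, t, z)) (fderiv ℝ v (x, y, z) (0, 1, 0)) y :=
    hdv.comp_hasDerivAt y hc
  have h1b : HasDerivAt (fun t => (v (x, t, z)).2) ((fderiv ℝ v (x, y, z) (0, 1, 0)).2) y :=
    (hasFDerivAt_snd.comp_hasDerivAt y h1 :)
  have hF := hasDerivAt_FF_line hv hc
  exact h1b.mul hF

lemma hasDerivAt_PZ (hv : ContDiff ℝ 2 v) (x y z : ℝ) :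
    HasDerivAt (fun t => wVert v (x, y, t) * FF v (x, y, t)) (TZ v (x, y, z)) z := by
  have hc : HasDerivAt (fun t => ((x, y, t) : ℝ × ℝ × ℝ)) ((0:ℝ), (0:ℝ), (1:ℝ)) z :=
    (hasDerivAt_const z x).prodMk ((hasDerivAt_const z y).prodMk (hasDerivAt_id z))
  have hgc : Continuous fun t => ((pdX v (x, y, t)).1 + (pdY v (x, y, t)).2) := by
    have hmap : Continuous fun t : ℝ => ((x, y, t) : ℝ × ℝ × ℝ) := by fun_prop
    have h1 := (cont_fderiv_v hv (1, 0, 0)).comp hmap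
    have h2 := (cont_fderiv_v hv (0, 1, 0)).comp hmap
    exact (h1.fst).add (h2.snd)
  have hw0 : HasDerivAt (fun t => ∫ s in (0:ℝ)..t, ((pdX v (x, y, s)).1 + (pdY v (x, y, s)).2))
      ((pdX v (x, y, z)).1 + (pdY v (x, y, z)).2) z :=
    intervalIntegral.integral_hasDerivAt_right (hgc.intervalIntegrable 0 z)
      hgc.stronglyMeasurable.stronglyMeasurableAtFilter hgc.continuousAt
  have hw : HasDerivAt (fun t => wVert v (x, y, t))
      (-((pdX v (x, y, z)).1 + (pdY v (x, y, z)).2)) z := by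
    have := hw0.neg
    refine HasDerivAt.congr_of_eventuallyEq this (Filter.Eventually.of_forall fun t => ?_)
    beta_reduce
    rw [wVert, intervalIntegral.integral_symm]
    rfl
  have hF := hasDerivAt_FF_line hv hc
  exact hw.mul hF

/-! ### Vanishing of the line integrals -/

lemma out_of_Q (hQ : IsCompact Q) :
    ∃ R : ℝ, 0 ≤ R ∧ ∀ x y : ℝ, R < |x| → (x, y) ∉ Q ∧ (y, x) ∉ Q := by
  obtain ⟨R, hR⟩ := hQ.isBounded.subset_closedBall 0
  refine ⟨max R 0, le_max_right _ _, fun x y hx => ?_⟩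
  constructor
  · intro hmem
    have h1 := hR hmem
    rw [Metric.mem_closedBall, dist_zero_right] at h1
    have h2 : |x| ≤ ‖((x, y) : ℝ × ℝ)‖ := by
      simpa using norm_fst_le ((x, y) : ℝ × ℝ)
    linarith [lt_of_le_of_lt (le_max_left R 0) hx]
  · intro hmem
    have h1 := hR hmem
    rw [Metric.mem_closedBall, dist_zero_right] at h1
    have h2 : |x| ≤ ‖((y, x) : ℝ × ℝ)‖ := by
      simpa using norm_snd_le ((y, x) : ℝ × ℝ)
    linarith [lt_of_le_of_lt (le_max_left R 0) hx]

lemma intX_zero (hv : ContDiff ℝ 2 v) (hQ : IsCompact Q)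
    (hsupp : ∀ x y z : ℝ, (x, y) ∉ Q → v (x, y, z) = 0) (p : ℝ × ℝ) :
    (∫ x : ℝ, TX v (x, p)) = 0 := by
  obtain ⟨R, hR0, hout⟩ := out_of_Q hQ
  set a : ℝ := R + 1 with ha
  have haout : ∀ x : ℝ, a ≤ |x| → (x, p.1) ∉ Q := fun x hx =>
    (hout x p.1 (by linarith)).1
  have hsub : Function.support (fun x => TX v (x, p)) ⊆ Set.Ioc (-a) a := by
    intro x hx
    by_contra hxmem
    apply hx
    have : a ≤ |x| := by
      rw [Set.mem_Ioc, not_and_or] at hxmem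
      rcases hxmem with h' | h'
      · push_neg at h'; rw [abs_of_nonpos (by linarith)]; linarith
      · push_neg at h'; rw [abs_of_pos (by linarith)]; linarith
    exact (T_vanish hQ hsupp (x, p) (haout x this)).1
  rw [← intervalIntegral.integral_eq_integral_of_support_subset hsub]
  rw [intervalIntegral.integral_eq_sub_of_hasDerivAt
    (fun x _ => hasDerivAt_PX hv p.1 p.2 x)
    (((cont_TX hv).comp (by fun_prop : Continuous fun t : ℝ =>
      ((t, p.1, p.2) : ℝ × ℝ × ℝ))).intervalIntegrable _ _)]
  have h1 : v (a, p.1, p.2) = 0 := hsupp a p.1 p.2 (haout a (by rw [abs_of_pos (by linarith)]))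
  have h2 : v (-a, p.1, p.2) = 0 := hsupp (-a) p.1 p.2
    (haout (-a) (by rw [abs_neg, abs_of_pos (by linarith)]))
  rw [h1, h2]
  simp

lemma intY_zero (hv : ContDiff ℝ 2 v) (hQ : IsCompact Q)
    (hsupp : ∀ x y z : ℝ, (x, y) ∉ Q → v (x, y, z) = 0) (x z : ℝ) :
    (∫ y : ℝ, TY v (x, y, z)) = 0 := by
  obtain ⟨R, hR0, hout⟩ := out_of_Q hQ
  set a : ℝ := R + 1 with ha
  have haout : ∀ y : ℝ, a ≤ |y| → (x, y) ∉ Q := fun y hy =>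
    (hout y x (by linarith)).2
  have hsub : Function.support (fun y => TY v (x, y, z)) ⊆ Set.Ioc (-a) a := by
    intro y hy
    by_contra hymem
    apply hy
    have : a ≤ |y| := by
      rw [Set.mem_Ioc, not_and_or] at hymem
      rcases hymem with h' | h'
      · push_neg at h'; rw [abs_of_nonpos (by linarith)]; linarith
      · push_neg at h'; rw [abs_of_pos (by linarith)]; linarith
    exact (T_vanish hQ hsupp (x, y, z) (haout y this)).2.1
  rw [← intervalIntegral.integral_eq_integral_of_support_subset hsub]
  rw [intervalIntegral.integral_eq_sub_of_hasDerivAt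
    (fun y _ => hasDerivAt_PY hv x z y)
    (((cont_TY hv).comp (by fun_prop : Continuous fun t : ℝ =>
      ((x, t, z) : ℝ × ℝ × ℝ))).intervalIntegrable _ _)]
  have h1 : v (x, a, z) = 0 := hsupp x a z (haout a (by rw [abs_of_pos (by linarith)]))
  have h2 : v (x, -a, z) = 0 := hsupp x (-a) z
    (haout (-a) (by rw [abs_neg, abs_of_pos (by linarith)]))
  rw [h1, h2]
  simp

lemma intZ_zero (hv : ContDiff ℝ 2 v) {h : ℝ} (hh : 0 < h)
    (hbaro : ∀ x y : ℝ,
      (∫ z in (-h)..(0:ℝ), ((pdX v (x, y, z)).1 + (pdY v (x, y, z)).2)) = 0) (x y : ℝ) :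
    (∫ z in Set.Icc (-h) (0:ℝ), TZ v (x, y, z)) = 0 := by
  rw [MeasureTheory.integral_Icc_eq_integral_Ioc,
    ← intervalIntegral.integral_of_le (by linarith : -h ≤ (0:ℝ))]
  rw [intervalIntegral.integral_eq_sub_of_hasDerivAt
    (fun z _ => hasDerivAt_PZ hv x y z)
    (((cont_TZ hv).comp (by fun_prop : Continuous fun t : ℝ =>
      ((x, y, t) : ℝ × ℝ × ℝ))).intervalIntegrable _ _)]
  have h1 : wVert v (x, y, (0:ℝ)) = 0 := by
    rw [wVert]
    exact intervalIntegral.integral_same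
  have h2 : wVert v (x, y, -h) = 0 := hbaro x y
  rw [h1, h2]
  ring

end aux

/-! ### Measure and integrability -/

lemma measure_slab_eq (h : ℝ) :
    ((volume : Measure (ℝ × ℝ × ℝ)).restrict {q : ℝ × ℝ × ℝ | q.2.2 ∈ Set.Icc (-h) 0})
      = (volume : Measure ℝ).prod ((volume : Measure ℝ).prod
          ((volume : Measure ℝ).restrict (Set.Icc (-h) 0))) := by
  have hs : {q : ℝ × ℝ × ℝ | q.2.2 ∈ Set.Icc (-h) 0}
      = Set.univ ×ˢ (Set.univ ×ˢ Set.Icc (-h) 0) := by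
    ext q; simp
  rw [hs, MeasureTheory.Measure.volume_eq_prod, ← Measure.prod_restrict,
    Measure.restrict_univ, MeasureTheory.Measure.volume_eq_prod, ← Measure.prod_restrict,
    Measure.restrict_univ]

lemma integrable_slab_of_vanish {Q : Set (ℝ × ℝ)} (h : ℝ) (hQ : IsCompact Q)
    (F : ℝ × ℝ × ℝ → ℝ) (hF : Continuous F)
    (h0 : ∀ q : ℝ × ℝ × ℝ, (q.1, q.2.1) ∉ Q → F q = 0) :
    Integrable F ((volume : Measure (ℝ × ℝ × ℝ)).restrict
      {q : ℝ × ℝ × ℝ | q.2.2 ∈ Set.Icc (-h) 0}) := by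
  set K : Set (ℝ × ℝ × ℝ) := (Homeomorph.prodAssoc ℝ ℝ ℝ) '' (Q ×ˢ Set.Icc (-h) 0) with hK
  have hKc : IsCompact K := (hQ.prod isCompact_Icc).image (Homeomorph.prodAssoc ℝ ℝ ℝ).continuous
  have hIK : IntegrableOn F K := hF.continuousOn.integrableOn_compact hKc
  have hUopen : IsOpen {q : ℝ × ℝ × ℝ | (q.1, q.2.1) ∉ Q} := by
    have : Continuous fun q : ℝ × ℝ × ℝ => ((q.1, q.2.1) : ℝ × ℝ) := by fun_prop
    exact (hQ.isClosed.preimage this).isOpen_compl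
  have hIU : IntegrableOn F {q : ℝ × ℝ × ℝ | (q.1, q.2.1) ∉ Q} :=
    (integrableOn_zero (ε' := ℝ)).congr_fun (fun q hq => (h0 q hq).symm) hUopen.measurableSet
  refine (hIK.union hIU).mono_set ?_
  intro q hq
  by_cases hmem : (q.1, q.2.1) ∈ Q
  · exact Or.inl ⟨((q.1, q.2.1), q.2.2), ⟨hmem, hq⟩, rfl⟩
  · exact Or.inr hmem

/-- **Orthogonality of the transport of the vertical gradient.** -/
theorem transport_vertical_gradient_orthogonal
    (h : ℝ) (hh : 0 < h)
    (v : ℝ × ℝ × ℝ → ℝ × ℝ) (hv : ContDiff ℝ 2 v)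
    (Q : Set (ℝ × ℝ)) (hQ : IsCompact Q)
    (hsupp : ∀ x y z : ℝ, (x, y) ∉ Q → v (x, y, z) = 0)
    (hbaro : ∀ x y : ℝ,
      (∫ z in (-h)..(0:ℝ), ((pdX v (x, y, z)).1 + (pdY v (x, y, z)).2)) = 0) :
    (∫ q : ℝ × ℝ × ℝ,
        (((v q).1 • fderiv ℝ (pdZ v) q (1, 0, 0)
            + (v q).2 • fderiv ℝ (pdZ v) q (0, 1, 0)
            + wVert v q • fderiv ℝ (pdZ v) q (0, 0, 1)).1 * (pdZ v q).1
          + ((v q).1 • fderiv ℝ (pdZ v) q (1, 0, 0)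
              + (v q).2 • fderiv ℝ (pdZ v) q (0, 1, 0)
              + wVert v q • fderiv ℝ (pdZ v) q (0, 0, 1)).2 * (pdZ v q).2)
        ∂((volume : Measure (ℝ × ℝ × ℝ)).restrict
            {q : ℝ × ℝ × ℝ | q.2.2 ∈ Set.Icc (-h) 0})) = 0 := by
  have hTv := T_vanish hQ hsupp
  have iTX : Integrable (TX v) ((volume : Measure (ℝ × ℝ × ℝ)).restrict
      {q : ℝ × ℝ × ℝ | q.2.2 ∈ Set.Icc (-h) 0}) :=
    integrable_slab_of_vanish h hQ _ (cont_TX hv) (fun q hq => (hTv q hq).1)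
  have iTY : Integrable (TY v) ((volume : Measure (ℝ × ℝ × ℝ)).restrict
      {q : ℝ × ℝ × ℝ | q.2.2 ∈ Set.Icc (-h) 0}) :=
    integrable_slab_of_vanish h hQ _ (cont_TY hv) (fun q hq => (hTv q hq).2.1)
  have iTZ : Integrable (TZ v) ((volume : Measure (ℝ × ℝ × ℝ)).restrict
      {q : ℝ × ℝ × ℝ | q.2.2 ∈ Set.Icc (-h) 0}) :=
    integrable_slab_of_vanish h hQ _ (cont_TZ hv) (fun q hq => (hTv q hq).2.2)
  have hcongr : (∫ q : ℝ × ℝ × ℝ,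
        (((v q).1 • fderiv ℝ (pdZ v) q (1, 0, 0)
            + (v q).2 • fderiv ℝ (pdZ v) q (0, 1, 0)
            + wVert v q • fderiv ℝ (pdZ v) q (0, 0, 1)).1 * (pdZ v q).1
          + ((v q).1 • fderiv ℝ (pdZ v) q (1, 0, 0)
              + (v q).2 • fderiv ℝ (pdZ v) q (0, 1, 0)
              + wVert v q • fderiv ℝ (pdZ v) q (0, 0, 1)).2 * (pdZ v q).2)
        ∂((volume : Measure (ℝ × ℝ × ℝ)).restrict
            {q : ℝ × ℝ × ℝ | q.2.2 ∈ Set.Icc (-h) 0}))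
      = ∫ q : ℝ × ℝ × ℝ, (TX v q + TY v q + TZ v q)
        ∂((volume : Measure (ℝ × ℝ × ℝ)).restrict
            {q : ℝ × ℝ × ℝ | q.2.2 ∈ Set.Icc (-h) 0}) :=
    integral_congr_ae (Filter.Eventually.of_forall (pointwise_eq v))
  have iXY : Integrable (fun q : ℝ × ℝ × ℝ => TX v q + TY v q)
      ((volume : Measure (ℝ × ℝ × ℝ)).restrict
        {q : ℝ × ℝ × ℝ | q.2.2 ∈ Set.Icc (-h) 0}) := iTX.add iTY
  rw [hcongr, integral_add iXY iTZ, integral_add iTX iTY]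
  -- transfer to the product measure
  rw [measure_slab_eq h] at iTX iTY iTZ ⊢
  have eX : (∫ q : ℝ × ℝ × ℝ, TX v q ∂((volume : Measure ℝ).prod ((volume : Measure ℝ).prod
      ((volume : Measure ℝ).restrict (Set.Icc (-h) 0))))) = 0 := by
    rw [MeasureTheory.integral_prod_symm _ iTX]
    simp only [intX_zero hv hQ hsupp]
    simp
  have eY : (∫ q : ℝ × ℝ × ℝ, TY v q ∂((volume : Measure ℝ).prod ((volume : Measure ℝ).prod
      ((volume : Measure ℝ).restrict (Set.Icc (-h) 0))))) = 0 := by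
    rw [MeasureTheory.integral_prod _ iTY]
    have : ∀ x : ℝ, (∫ p : ℝ × ℝ, TY v (x, p) ∂((volume : Measure ℝ).prod
        ((volume : Measure ℝ).restrict (Set.Icc (-h) 0)))) = 0 := by
      intro x
      by_cases hI : Integrable (fun p : ℝ × ℝ => TY v (x, p))
          ((volume : Measure ℝ).prod ((volume : Measure ℝ).restrict (Set.Icc (-h) 0)))
      · rw [MeasureTheory.integral_prod_symm _ hI]
        simp only [intY_zero hv hQ hsupp]
        simp
      · exact integral_undef hI
    simp only [this]
    simp
  have eZ : (∫ q : ℝ × ℝ × ℝ, TZ v q ∂((volume : Measure ℝ).prod ((volume : Measure ℝ).prod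
      ((volume : Measure ℝ).restrict (Set.Icc (-h) 0))))) = 0 := by
    rw [MeasureTheory.integral_prod _ iTZ]
    have : ∀ x : ℝ, (∫ p : ℝ × ℝ, TZ v (x, p) ∂((volume : Measure ℝ).prod
        ((volume : Measure ℝ).restrict (Set.Icc (-h) 0)))) = 0 := by
      intro x
      by_cases hI : Integrable (fun p : ℝ × ℝ => TZ v (x, p))
          ((volume : Measure ℝ).prod ((volume : Measure ℝ).restrict (Set.Icc (-h) 0)))
      · rw [MeasureTheory.integral_prod _ hI]
        have := fun y : ℝ => intZ_zero hv hh hbaro x y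
        simp only [this]
        simp
      · exact integral_undef hI
    simp only [this]
    simp
  rw [eX, eY, eZ]
  ring
end
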